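/- A divisor δ ∈ 𝒟 lies in 𝒫₁ + 𝒫₂ if and only if the following three conditions all hold: (1) Σ_{v∈V} ι(v)·δ(v) = 0 in ℤ/nℤ, where ι assigns to each of z_i^j, x_i^j, y_i^j its index i ∈ ℤ/nℤ; (2) for each 1 ≤ j ≤ t, Σ_{i∈ℤ/nℤ} δ(x_i^j) = Σ_{i∈ℤ/nℤ} δ(y_i^j) (as integers); and (3) for each 1 ≤ j ≤ s, Σ_{i∈ℤ/nℤ} δ(z_i^j) is even. -/

import Mathlib

open scoped BigOperators

section Setup

variable (n s t : ℕ) [NeZero n]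

/-- The vertex set: `Sum.inl (j,i)` is `z_i^j`, `Sum.inr (Sum.inl (j,i))` is `x_i^j`,
`Sum.inr (Sum.inr (j,i))` is `y_i^j`. -/
abbrev Vrt := (Fin s × ZMod n) ⊕ ((Fin t × ZMod n) ⊕ (Fin t × ZMod n))

def zv (j : Fin s) (i : ZMod n) : Vrt n s t := Sum.inl (j, i)
def xv (j : Fin t) (i : ZMod n) : Vrt n s t := Sum.inr (Sum.inl (j, i))
def yv (j : Fin t) (i : ZMod n) : Vrt n s t := Sum.inr (Sum.inr (j, i))

/-- The involution σ₁. -/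
def sig1 : Vrt n s t → Vrt n s t
  | Sum.inl (j, i) => Sum.inl (j, 1 - i)
  | Sum.inr (Sum.inl (j, i)) => Sum.inr (Sum.inr (j, 1 - i))
  | Sum.inr (Sum.inr (j, i)) => Sum.inr (Sum.inl (j, 1 - i))

/-- The involution σ₂. -/
def sig2 : Vrt n s t → Vrt n s t
  | Sum.inl (j, i) => Sum.inl (j, 2 - i)
  | Sum.inr (Sum.inl (j, i)) => Sum.inr (Sum.inr (j, 2 - i))
  | Sum.inr (Sum.inr (j, i)) => Sum.inr (Sum.inl (j, 2 - i))

/-- The rotation ρ = σ₂ ∘ σ₁. -/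
def rho : Vrt n s t → Vrt n s t := sig2 n s t ∘ sig1 n s t

/-- The index of a vertex, an element of ℤ/nℤ. -/
def idx : Vrt n s t → ZMod n
  | Sum.inl (_, i) => i
  | Sum.inr (Sum.inl (_, i)) => i
  | Sum.inr (Sum.inr (_, i)) => i

/-- The group 𝒟 of divisors of total degree zero. -/
def DivD : AddSubgroup (Vrt n s t → ℤ) where
  carrier := {δ | ∑ v, δ v = 0}
  zero_mem' := by simp
  add_mem' := by
    intro a b ha hb
    simp only [Set.mem_setOf_eq, Pi.add_apply, Finset.sum_add_distrib] at *
    simp [ha, hb]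
  neg_mem' := by
    intro a ha
    simp only [Set.mem_setOf_eq, Pi.neg_apply, Finset.sum_neg_distrib] at *
    simp [ha]

/-- 𝒫₁ : degree-zero divisors invariant under σ₁ with even values at σ₁-fixed vertices. -/
def Pgp1 : AddSubgroup (Vrt n s t → ℤ) where
  carrier := {δ | (∑ v, δ v = 0) ∧ (∀ v, δ (sig1 n s t v) = δ v) ∧
      ∀ v, sig1 n s t v = v → Even (δ v)}
  zero_mem' := ⟨by simp, fun _ => rfl, fun _ _ => by simp⟩
  add_mem' := by
    rintro a b ⟨ha0, ha1, ha2⟩ ⟨hb0, hb1, hb2⟩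
    refine ⟨?_, fun v => by simp [ha1 v, hb1 v], fun v hv => (ha2 v hv).add (hb2 v hv)⟩
    simp [Finset.sum_add_distrib, ha0, hb0]
  neg_mem' := by
    rintro a ⟨ha0, ha1, ha2⟩
    exact ⟨by simp [Finset.sum_neg_distrib, ha0], fun v => by simp [ha1 v],
      fun v hv => (ha2 v hv).neg⟩

/-- 𝒫₂ : degree-zero divisors invariant under σ₂ with even values at σ₂-fixed vertices. -/
def Pgp2 : AddSubgroup (Vrt n s t → ℤ) where
  carrier := {δ | (∑ v, δ v = 0) ∧ (∀ v, δ (sig2 n s t v) = δ v) ∧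
      ∀ v, sig2 n s t v = v → Even (δ v)}
  zero_mem' := ⟨by simp, fun _ => rfl, fun _ _ => by simp⟩
  add_mem' := by
    rintro a b ⟨ha0, ha1, ha2⟩ ⟨hb0, hb1, hb2⟩
    refine ⟨?_, fun v => by simp [ha1 v, hb1 v], fun v hv => (ha2 v hv).add (hb2 v hv)⟩
    simp [Finset.sum_add_distrib, ha0, hb0]
  neg_mem' := by
    rintro a ⟨ha0, ha1, ha2⟩
    exact ⟨by simp [Finset.sum_neg_distrib, ha0], fun v => by simp [ha1 v],
      fun v hv => (ha2 v hv).neg⟩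

/-- 𝒫₃ : degree-zero divisors invariant under ρ. -/
def Pgp3 : AddSubgroup (Vrt n s t → ℤ) where
  carrier := {δ | (∑ v, δ v = 0) ∧ ∀ v, δ (rho n s t v) = δ v}
  zero_mem' := ⟨by simp, fun _ => rfl⟩
  add_mem' := by
    rintro a b ⟨ha0, ha1⟩ ⟨hb0, hb1⟩
    exact ⟨by simp [Finset.sum_add_distrib, ha0, hb0], fun v => by simp [ha1 v, hb1 v]⟩
  neg_mem' := by
    rintro a ⟨ha0, ha1⟩
    exact ⟨by simp [Finset.sum_neg_distrib, ha0], fun v => by simp [ha1 v]⟩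

/-- 𝒫₀ : degree-zero divisors constant on each D_n-orbit with even values at the z-vertices
(the pullbacks of degree-zero divisors on G/D_n). -/
def Pgp0 : AddSubgroup (Vrt n s t → ℤ) where
  carrier := {δ | (∑ v, δ v = 0) ∧
      (∀ j i₁ i₂, δ (zv n s t j i₁) = δ (zv n s t j i₂)) ∧
      (∀ j i₁ i₂, δ (xv n s t j i₁) = δ (xv n s t j i₂)) ∧
      (∀ j i₁ i₂, δ (xv n s t j i₁) = δ (yv n s t j i₂)) ∧
      ∀ j i, Even (δ (zv n s t j i))}
  zero_mem' := ⟨by simp, fun _ _ _ => rfl, fun _ _ _ => rfl, fun _ _ _ => rfl,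
    fun _ _ => by simp⟩
  add_mem' := by
    rintro a b ⟨ha0, ha1, ha2, ha3, ha4⟩ ⟨hb0, hb1, hb2, hb3, hb4⟩
    exact ⟨by simp [Finset.sum_add_distrib, ha0, hb0],
      fun j i₁ i₂ => by simp [ha1 j i₁ i₂, hb1 j i₁ i₂],
      fun j i₁ i₂ => by simp [ha2 j i₁ i₂, hb2 j i₁ i₂],
      fun j i₁ i₂ => by simp [ha3 j i₁ i₂, hb3 j i₁ i₂],
      fun j i => (ha4 j i).add (hb4 j i)⟩
  neg_mem' := by
    rintro a ⟨ha0, ha1, ha2, ha3, ha4⟩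
    exact ⟨by simp [Finset.sum_neg_distrib, ha0],
      fun j i₁ i₂ => by simp [ha1 j i₁ i₂],
      fun j i₁ i₂ => by simp [ha2 j i₁ i₂],
      fun j i₁ i₂ => by simp [ha3 j i₁ i₂],
      fun j i => (ha4 j i).neg⟩

/-- σ₁ as a permutation of the vertex set. -/
def sig1e : Equiv.Perm (Vrt n s t) where
  toFun := sig1 n s t
  invFun := sig1 n s t
  left_inv := by rintro (⟨j, i⟩ | ⟨j, i⟩ | ⟨j, i⟩) <;> simp [sig1, sub_sub_cancel]
  right_inv := by rintro (⟨j, i⟩ | ⟨j, i⟩ | ⟨j, i⟩) <;> simp [sig1, sub_sub_cancel]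

/-- σ₂ as a permutation of the vertex set. -/
def sig2e : Equiv.Perm (Vrt n s t) where
  toFun := sig2 n s t
  invFun := sig2 n s t
  left_inv := by rintro (⟨j, i⟩ | ⟨j, i⟩ | ⟨j, i⟩) <;> simp [sig2, sub_sub_cancel]
  right_inv := by rintro (⟨j, i⟩ | ⟨j, i⟩ | ⟨j, i⟩) <;> simp [sig2, sub_sub_cancel]

/-- The dihedral group D_n, realized as the subgroup of permutations of the vertex set
generated by σ₁ and σ₂. -/
def dihedral : Subgroup (Equiv.Perm (Vrt n s t)) :=
  Subgroup.closure {sig1e n s t, sig2e n s t}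

/-- The multigraph with `w u v` edges between `u` and `v`, seen as a simple graph
recording adjacency. -/
def wGraph (w : Vrt n s t → Vrt n s t → ℕ) : SimpleGraph (Vrt n s t) where
  Adj u v := u ≠ v ∧ (w u v ≠ 0 ∨ w v u ≠ 0)
  symm := ⟨by rintro u v ⟨h1, h2⟩; exact ⟨h1.symm, h2.symm⟩⟩
  loopless := ⟨by rintro v ⟨h, _⟩; exact h rfl⟩

/-- The firing divisor `L_v`. -/
def fire (w : Vrt n s t → Vrt n s t → ℕ) (v u : Vrt n s t) : ℤ :=
  if u = v then -(∑ x, (w v x : ℤ)) else (w u v : ℤ)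

/-- The lattice ℒ generated by the firing divisors. -/
def FireLat (w : Vrt n s t → Vrt n s t → ℕ) : AddSubgroup (Vrt n s t → ℤ) :=
  AddSubgroup.closure (Set.range (fire n s t w))

/-- Harmonicity: no nontrivial element of D_n fixes both endpoints of an edge. -/
def Harmonic (w : Vrt n s t → Vrt n s t → ℕ) : Prop :=
  ∀ g ∈ dihedral n s t, g ≠ 1 →
    ∀ u v : Vrt n s t, (wGraph n s t w).Adj u v → ¬(g u = u ∧ g v = v)

/-- The critical group K(G) = 𝒟/ℒ. -/
abbrev KGrp (w : Vrt n s t → Vrt n s t → ℕ) :=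
  DivD n s t ⧸ ((FireLat n s t w).addSubgroupOf (DivD n s t))

/-- The image (𝒫 + ℒ)/ℒ of a subgroup 𝒫 of divisors in the critical group. -/
def Jsub (w : Vrt n s t → Vrt n s t → ℕ) (P : AddSubgroup (Vrt n s t → ℤ)) :
    AddSubgroup (KGrp n s t w) :=
  ((P ⊔ FireLat n s t w).addSubgroupOf (DivD n s t)).map
    (QuotientAddGroup.mk' ((FireLat n s t w).addSubgroupOf (DivD n s t)))

/-- The sum map Φ : J₁ × J₂ × J₃ → K(G). -/
def Phi (w : Vrt n s t → Vrt n s t → ℕ) :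
    (Jsub n s t w (Pgp1 n s t) × Jsub n s t w (Pgp2 n s t) × Jsub n s t w (Pgp3 n s t)) →+
      KGrp n s t w where
  toFun p := (p.1 : KGrp n s t w) + (p.2.1 : KGrp n s t w) + (p.2.2 : KGrp n s t w)
  map_zero' := by simp
  map_add' := by
    intro a b
    simp only [Prod.fst_add, Prod.snd_add, AddSubgroup.coe_add]
    abel

/-- The subgroup ℒ′ of ℒ. -/
def FireLat' (w : Vrt n s t → Vrt n s t → ℕ) : AddSubgroup (Vrt n s t → ℤ) :=
  AddSubgroup.closure
    ({d | ∃ j i, d = fire n s t w (zv n s t j i)} ∪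
     {d | ∃ j i₁ i₂, d = fire n s t w (xv n s t j i₁) + fire n s t w (yv n s t j i₂)} ∪
     {d | ∃ j, d = ∑ i, fire n s t w (xv n s t j i)} ∪
     {d | ∃ j, d = ∑ i, fire n s t w (yv n s t j i)})

end Setup

section Helpers
variable {n : ℕ} [NeZero n] {M : Type*} [AddCommGroup M]

lemma val_neg_one'' : (-1 : ZMod n).val = n - 1 := by
  obtain ⟨m, rfl⟩ := Nat.exists_eq_succ_of_ne_zero (NeZero.ne n)
  exact ZMod.val_neg_one m

lemma sum_shift_sub (c : ZMod n) (h : ZMod n → M) :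
    ∑ i : ZMod n, h (c - i) = ∑ i : ZMod n, h i :=
  Fintype.sum_equiv (Equiv.subLeft c) _ _ (fun _ => rfl)

lemma sum_range_cast (h : ZMod n → M) :
    ∑ m ∈ Finset.range n, h ((m : ℕ) : ZMod n) = ∑ z : ZMod n, h z := by
  apply Finset.sum_nbij' (fun m => ((m : ℕ) : ZMod n)) (fun z => z.val)
  · intro a _; exact Finset.mem_univ _
  · intro z _; exact Finset.mem_range.2 (ZMod.val_lt z)
  · intro a ha; exact ZMod.val_cast_of_lt (Finset.mem_range.1 ha)
  · intro z _; exact ZMod.natCast_rightInverse z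
  · intro a _; rfl

lemma cast_natCast_val (k : ZMod n) : ((k.val : ℕ) : ZMod n) = k := ZMod.natCast_rightInverse k

lemma val_sub_one_of_pos {k : ZMod n} (h : 0 < k.val) : (k - 1).val = k.val - 1 := by
  have h1 : ((k.val - 1 : ℕ) : ZMod n) = k - 1 := by
    push_cast [Nat.cast_sub h]
    rw [cast_natCast_val]
  rw [← h1, ZMod.val_cast_of_lt]
  have := ZMod.val_lt k
  omega

lemma tel (d : ZMod n → ℤ) (h : ∑ i, d i = 0) :
    ∃ F : ZMod n → ℤ, (∀ k, F k = ∑ m ∈ Finset.range k.val, d ((m+1 : ℕ) : ZMod n)) ∧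
      ∀ k, F k - F (k - 1) = d k := by
  refine ⟨fun k => ∑ m ∈ Finset.range k.val, d ((m+1 : ℕ) : ZMod n), fun k => rfl, ?_⟩
  intro k
  show (∑ m ∈ Finset.range k.val, d ((m+1 : ℕ) : ZMod n))
      - (∑ m ∈ Finset.range (k-1).val, d ((m+1 : ℕ) : ZMod n)) = d k
  rcases Nat.eq_zero_or_pos k.val with h0 | hpos
  · have hk : k = 0 := (ZMod.val_eq_zero k).1 h0
    subst hk
    have hval : ((0 : ZMod n) - 1).val = n - 1 := by rw [zero_sub]; exact val_neg_one''
    rw [hval, ZMod.val_zero, Finset.range_zero, Finset.sum_empty, zero_sub]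
    have key : ∑ m ∈ Finset.range (n-1), d ((m+1 : ℕ) : ZMod n) + d 0 = 0 := by
      rw [← h, ← sum_range_cast d]
      have hn1 : 0 < n := Nat.pos_of_ne_zero (NeZero.ne n)
      have hr : Finset.range n = Finset.range ((n-1)+1) := by
        congr 1; omega
      rw [hr, Finset.sum_range_succ']
      push_cast
      rfl
    linarith
  · have hk1 : (k - 1).val = k.val - 1 := val_sub_one_of_pos hpos
    rw [hk1]
    have h2 : k.val = (k.val - 1) + 1 := by omega
    rw [h2, Finset.sum_range_succ]
    have h3 : ((k.val - 1 + 1 : ℕ) : ZMod n) = k := by rw [← h2]; exact cast_natCast_val k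
    rw [h3]
    have h4 : k.val - 1 + 1 - 1 = k.val - 1 := by omega
    rw [h4]
    ring


lemma pair_sum {V : Type*} [Fintype V] [DecidableEq V] (σ : V → V)
    (hinv : ∀ v, σ (σ v) = v) (δ : V → ℤ)
    (h1 : ∀ v, δ (σ v) = δ v) (h2 : ∀ v, σ v = v → Even (δ v)) :
    ∃ W : ℤ, (∑ v, δ v) = 2 * W ∧
      ∀ (κ : V → ZMod n) (c : ZMod n), (∀ v, κ v + κ (σ v) = c) →
        ∑ v, κ v * ((δ v : ℤ) : ZMod n) = c * ((W : ℤ) : ZMod n) := by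
  classical
  let q : V ≃ Fin (Fintype.card V) := Fintype.equivFin V
  set P : Finset V := Finset.univ.filter (fun v => q v < q (σ v)) with hP
  set Q : Finset V := Finset.univ.filter (fun v => q (σ v) < q v) with hQ
  set Fx : Finset V := Finset.univ.filter (fun v => σ v = v) with hFx
  have hsplit : ∀ {M : Type} [AddCommGroup M] (f : V → M),
      ∑ v, f v = ∑ v ∈ P, f v + ∑ v ∈ Q, f v + ∑ v ∈ Fx, f v := by
    intro M _ f
    rw [← Finset.sum_filter_add_sum_filter_not Finset.univ (fun v => q v < q (σ v)) f]
    rw [← Finset.sum_filter_add_sum_filter_not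
      (Finset.univ.filter (fun v => ¬ (q v < q (σ v)))) (fun v => q (σ v) < q v) f]
    rw [Finset.filter_filter, Finset.filter_filter]
    have e1 : Finset.univ.filter (fun v => ¬ (q v < q (σ v)) ∧ q (σ v) < q v) = Q := by
      rw [hQ]; apply Finset.filter_congr; intro v _
      constructor
      · rintro ⟨_, h⟩; exact h
      · intro h; exact ⟨fun h' => absurd (h.trans h') (lt_irrefl _), h⟩
    have e2 : Finset.univ.filter (fun v => ¬ (q v < q (σ v)) ∧ ¬ (q (σ v) < q v)) = Fx := by
      rw [hFx]; apply Finset.filter_congr; intro v _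
      constructor
      · rintro ⟨ha, hb⟩
        exact q.injective (le_antisymm (not_lt.1 hb) (not_lt.1 ha)).symm
      · intro h; rw [h]; exact ⟨lt_irrefl _, lt_irrefl _⟩
    rw [e1, e2, ← hP]; abel
  have hbij : ∀ {M : Type} [AddCommGroup M] (f : V → M),
      ∑ v ∈ Q, f v = ∑ v ∈ P, f (σ v) := by
    intro M _ f
    apply Finset.sum_nbij' (fun v => σ v) (fun v => σ v)
    · intro a ha
      rw [hP, Finset.mem_filter]
      rw [hQ, Finset.mem_filter] at ha
      refine ⟨Finset.mem_univ _, ?_⟩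
      rw [hinv a]; exact ha.2
    · intro a ha
      rw [hQ, Finset.mem_filter]
      rw [hP, Finset.mem_filter] at ha
      refine ⟨Finset.mem_univ _, ?_⟩
      rw [hinv a]; exact ha.2
    · intro a _; exact hinv a
    · intro a _; exact hinv a
    · intro a _; rw [hinv a]
  -- the halved fixed part
  have hfix2 : ∀ v ∈ Fx, δ v = 2 * (δ v / 2) := by
    intro v hv
    rw [hFx, Finset.mem_filter] at hv
    exact (Int.two_mul_ediv_two_of_even (h2 v hv.2)).symm
  refine ⟨∑ v ∈ P, δ v + ∑ v ∈ Fx, (δ v / 2), ?_, ?_⟩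
  · rw [hsplit δ, hbij δ]
    have : ∑ v ∈ P, δ (σ v) = ∑ v ∈ P, δ v := Finset.sum_congr rfl (fun v _ => h1 v)
    rw [this]
    have : ∑ v ∈ Fx, δ v = ∑ v ∈ Fx, 2 * (δ v / 2) := Finset.sum_congr rfl hfix2
    rw [this]
    have : ∑ v ∈ Fx, 2 * (δ v / 2) = 2 * ∑ v ∈ Fx, (δ v / 2) := by rw [Finset.mul_sum]
    rw [this]
    ring
  · intro κ c hκ
    rw [hsplit (fun v => κ v * ((δ v : ℤ) : ZMod n)), hbij]
    push_cast
    have e1 : ∑ v ∈ P, κ (σ v) * ((δ (σ v) : ℤ) : ZMod n)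
        = ∑ v ∈ P, κ (σ v) * ((δ v : ℤ) : ZMod n) := by
      apply Finset.sum_congr rfl; intro v _; rw [h1 v]
    have e2 : ∑ v ∈ P, κ v * ((δ v : ℤ) : ZMod n) + ∑ v ∈ P, κ (σ v) * ((δ v : ℤ) : ZMod n)
        = ∑ v ∈ P, c * ((δ v : ℤ) : ZMod n) := by
      rw [← Finset.sum_add_distrib]
      apply Finset.sum_congr rfl; intro v _
      rw [← add_mul, hκ v]
    have e3 : ∑ v ∈ Fx, κ v * ((δ v : ℤ) : ZMod n)
        = ∑ v ∈ Fx, c * (((δ v / 2 : ℤ)) : ZMod n) := by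
      apply Finset.sum_congr rfl; intro v hv
      have hfv : σ v = v := by rw [hFx, Finset.mem_filter] at hv; exact hv.2
      have hc : κ v + κ v = c := by
        have := hκ v
        rw [hfv] at this
        exact this
      rw [← hc]
      have h5 : ((δ v : ℤ) : ZMod n) = ((2 * (δ v / 2) : ℤ) : ZMod n) := by
        rw [← hfix2 v hv]
      rw [h5]
      push_cast
      ring
    rw [e1, e2, e3]
    rw [mul_add, Finset.mul_sum, Finset.mul_sum]
end Helpers

section ZCol
variable {n : ℕ} [NeZero n]

lemma refl_sum {M : Type*} [AddCommGroup M] (D : ZMod n → M) (u w : ℕ) (h : u + w = n + 2) :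
    ∑ ℓ ∈ Finset.Icc u w, (D (ℓ : ZMod n) - D (2 - (ℓ : ZMod n))) = 0 := by
  rw [Finset.sum_sub_distrib, sub_eq_zero]
  apply Finset.sum_nbij' (fun ℓ => u + w - ℓ) (fun ℓ => u + w - ℓ)
  · intro a ha; simp only [Finset.mem_Icc] at *; omega
  · intro a ha; simp only [Finset.mem_Icc] at *; omega
  · intro a ha; simp only [Finset.mem_Icc] at ha; omega
  · intro a ha; simp only [Finset.mem_Icc] at ha; omega
  · intro a ha
    simp only [Finset.mem_Icc] at ha
    congr 1
    have hcast : ((u + w - a : ℕ) : ZMod n) = 2 - (a : ZMod n) := by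
      have h3 : a ≤ 2 + n := by omega
      rw [show u + w = 2 + n by omega, Nat.cast_sub h3]
      push_cast [ZMod.natCast_self]
      ring
    rw [hcast]
    ring

lemma even_iff_cast2 (x : ℤ) : Even x ↔ ((x : ZMod 2) = 0) := by
  rw [ZMod.intCast_zmod_eq_zero_iff_dvd]
  constructor
  · rintro ⟨m, rfl⟩
    exact ⟨m, by push_cast; ring⟩
  · rintro ⟨m, hm⟩
    refine ⟨m, by push_cast at hm; omega⟩

lemma realize (c : ZMod n) (Fc : ZMod n → ℤ) (hsym : ∀ i, Fc (c - i) = Fc i)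
    (hev : ∀ i, i + i = c → Even (Fc i)) :
    ∃ f : ZMod n → ℤ, ∀ i, f i + f (c - i) = Fc i := by
  classical
  refine ⟨fun i => if i + i = c then Fc i / 2 else if (c - i).val < i.val then 0 else Fc i, ?_⟩
  intro i
  by_cases h : i + i = c
  · have hci : c - i = i := by rw [← h]; ring
    rw [hci]
    simp only [if_pos h]
    obtain ⟨m, hm⟩ := hev i h
    rw [hm, show m + m = 2 * m by ring, Int.mul_ediv_cancel_left m (by norm_num)]
    ring
  · have h2 : ¬ ((c - i) + (c - i) = c) := by
      intro hcc
      exact h (by linear_combination -hcc)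
    have hne : c - i ≠ i := fun he => h (by linear_combination -he)
    have hvne : (c - i).val ≠ i.val := fun hv =>
      hne (by rw [← cast_natCast_val (c-i), hv, cast_natCast_val])
    have hcc : c - (c - i) = i := by ring
    simp only [if_neg h, if_neg h2, hcc]
    rcases lt_or_gt_of_ne hvne with hlt | hgt
    · rw [if_pos hlt, if_neg (by omega), zero_add, hsym]
    · rw [if_neg (by omega), if_pos hgt, add_zero]

lemma zcol (hn : 3 ≤ n) (D : ZMod n → ℤ) (hev : Even (∑ i, D i)) :
    ∃ f g : ZMod n → ℤ, ∀ i, f i + f (1 - i) + g i + g (2 - i) = D i := by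
  haveI : Fact (1 < n) := ⟨by omega⟩
  set d' : ZMod n → ℤ := fun ℓ => D ℓ - D (2 - ℓ) with hd'
  have hd'0 : ∑ ℓ, d' ℓ = 0 := by
    rw [hd']
    rw [Finset.sum_sub_distrib, sub_eq_zero]
    exact (sum_shift_sub 2 D).symm
  obtain ⟨F, hFdef, hFstep⟩ := tel d' hd'0
  have hval1 : (1 : ZMod n).val = 1 := ZMod.val_one n
  have hF0 : F 0 = 0 := by rw [hFdef]; simp
  have hF1 : F 1 = 0 := by
    rw [hFdef, hval1]
    rw [Finset.sum_range_one]
    show d' ((1 : ℕ) : ZMod n) = 0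
    rw [hd']
    norm_num
  -- symmetry of F
  have aux : ∀ i : ZMod n, i.val ≤ (1 - i).val → F (1 - i) = F i := by
    intro i hle
    rcases Nat.lt_or_ge i.val 2 with hv | hv
    · interval_cases h : i.val
      · have : i = 0 := (ZMod.val_eq_zero i).1 h
        rw [this, sub_zero, hF1, hF0]
      · exfalso
        have hi : i = 1 := by rw [← cast_natCast_val i, h]; norm_num
        rw [hi, sub_self] at hle
        simp [hval1, ZMod.val_zero] at hle
    · set v := i.val with hvv
      have hvn : v < n := ZMod.val_lt i
      have hsub : (1 - i) = ((n + 1 - v : ℕ) : ZMod n) := by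
        have h2 : v ≤ n + 1 := by omega
        push_cast [Nat.cast_sub h2]
        rw [cast_natCast_val]
        simp
      have hval' : (1 - i).val = n + 1 - v := by
        rw [hsub, ZMod.val_cast_of_lt (by omega)]
      rw [hFdef (1-i), hFdef i, hval']
      have hsplitr : Finset.range (n + 1 - v) = Finset.range v ∪ Finset.Ico v (n + 1 - v) := by
        rw [Finset.range_eq_Ico, Finset.range_eq_Ico]
        exact (Finset.Ico_union_Ico_eq_Ico (by omega) (by omega)).symm
      rw [hsplitr, Finset.sum_union (by
        rw [Finset.range_eq_Ico]
        exact Finset.Ico_disjoint_Ico_consecutive 0 v (n+1-v))]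
      have hzero : ∑ m ∈ Finset.Ico v (n + 1 - v), d' ((m + 1 : ℕ) : ZMod n) = 0 := by
        have := refl_sum (n := n) D (v+1) (n+1-v) (by omega)
        rw [← this]
        apply Finset.sum_nbij' (fun m => m + 1) (fun ℓ => ℓ - 1)
        · intro a ha; simp only [Finset.mem_Icc, Finset.mem_Ico] at *; omega
        · intro a ha; simp only [Finset.mem_Icc, Finset.mem_Ico] at *; omega
        · intro a _; omega
        · intro a ha; simp only [Finset.mem_Icc] at ha; omega
        · intro a _; rw [hd']
      rw [hzero, add_zero]
  have hSym : ∀ i : ZMod n, F (1 - i) = F i := by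
    intro i
    rcases Nat.le_total i.val (1 - i).val with h | h
    · exact aux i h
    · have := aux (1 - i) (by rwa [sub_sub_cancel])
      rw [sub_sub_cancel] at this
      exact this.symm
  -- F' = F + D 1, G = D - F'
  set F' : ZMod n → ℤ := fun i => F i + D 1 with hF'
  set G : ZMod n → ℤ := fun i => D i - F' i with hG
  have hSym' : ∀ i : ZMod n, F' (1 - i) = F' i := by
    intro i; simp only [hF']; rw [hSym]
  have hGsym : ∀ i : ZMod n, G (2 - i) = G i := by
    intro i
    have h1 : F' (i - 1) = F' (2 - i) := by
      have h := hSym' (2 - i)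
      rw [show (1 : ZMod n) - (2 - i) = i - 1 by ring] at h
      exact h
    have h2 : F i - F (i - 1) = D i - D (2 - i) := hFstep i
    show D (2-i) - F' (2-i) = D i - F' i
    have e1 : F' (2 - i) = F (i-1) + D 1 := by rw [← h1]
    have e2 : F' i = F i + D 1 := rfl
    rw [e1, e2]
    linarith
  -- parity bookkeeping in ZMod 2
  set D2 : ℕ → ZMod 2 := fun ℓ => ((D ((ℓ : ℕ) : ZMod n) : ℤ) : ZMod 2) with hD2
  have hD2sum : ∑ ℓ ∈ Finset.Ioc 0 (n-1), D2 ℓ = D2 0 := by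
    have htot : ∑ ℓ ∈ Finset.range n, D2 ℓ = 0 := by
      have h1 : ∑ ℓ ∈ Finset.range n, D2 ℓ = ((∑ z : ZMod n, D z : ℤ) : ZMod 2) := by
        push_cast
        exact sum_range_cast (fun z => ((D z : ℤ) : ZMod 2))
      rw [h1]
      obtain ⟨m, hm⟩ := hev
      rw [hm]
      push_cast
      exact CharTwo.add_self_eq_zero _
    have hr : Finset.range n = insert 0 (Finset.Ioc 0 (n-1)) := by
      ext x; simp only [Finset.mem_range, Finset.mem_insert, Finset.mem_Ioc]; omega
    rw [hr, Finset.sum_insert (by simp)] at htot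
    rw [eq_neg_of_add_eq_zero_right htot, CharTwo.neg_eq]
  have hsubF : ∀ i : ZMod n, 2 ≤ i.val →
      ((F i : ℤ) : ZMod 2) = (∑ ℓ ∈ Finset.Icc 1 i.val, D2 ℓ) + D2 1 + D2 0
        + ∑ ℓ ∈ Finset.Icc (n + 2 - i.val) (n-1), D2 ℓ := by
    intro i hv2
    have hvn : i.val < n := ZMod.val_lt i
    rw [hFdef i, Int.cast_sum]
    have hterm : ∀ m : ℕ, ((d' ((m+1 : ℕ) : ZMod n) : ℤ) : ZMod 2)
        = D2 (m+1) + ((D (2 - ((m+1 : ℕ) : ZMod n)) : ℤ) : ZMod 2) := by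
      intro m
      show ((D ((m+1 : ℕ) : ZMod n) - D (2 - ((m+1 : ℕ) : ZMod n)) : ℤ) : ZMod 2) = _
      rw [Int.cast_sub, CharTwo.sub_eq_add]
    rw [Finset.sum_congr rfl (fun m _ => hterm m), Finset.sum_add_distrib]
    have hs1 : ∑ m ∈ Finset.range i.val, D2 (m+1) = ∑ ℓ ∈ Finset.Icc 1 i.val, D2 ℓ := by
      apply Finset.sum_nbij' (fun m => m + 1) (fun ℓ => ℓ - 1)
      · intro a ha; simp only [Finset.mem_range, Finset.mem_Icc] at *; omega
      · intro a ha; simp only [Finset.mem_range, Finset.mem_Icc] at *; omega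
      · intro a _; omega
      · intro a ha; simp only [Finset.mem_Icc] at ha; omega
      · intro a _; rfl
    have hsplit2 : Finset.range i.val = insert 0 (insert 1 (Finset.Ico 2 i.val)) := by
      ext x
      simp only [Finset.mem_range, Finset.mem_insert, Finset.mem_Ico]
      omega
    have hs2 : ∑ m ∈ Finset.range i.val, ((D (2 - ((m+1 : ℕ) : ZMod n)) : ℤ) : ZMod 2)
        = D2 1 + D2 0 + ∑ ℓ ∈ Finset.Icc (n + 2 - i.val) (n-1), D2 ℓ := by
      rw [hsplit2, Finset.sum_insert (by simp), Finset.sum_insert (by simp)]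
      have ht0 : ((D (2 - ((0+1 : ℕ) : ZMod n)) : ℤ) : ZMod 2) = D2 1 := by
        have e : (2 : ZMod n) - ((0+1 : ℕ) : ZMod n) = ((1 : ℕ) : ZMod n) := by
          push_cast; ring
        rw [e]
      have ht1 : ((D (2 - ((1+1 : ℕ) : ZMod n)) : ℤ) : ZMod 2) = D2 0 := by
        have e : (2 : ZMod n) - ((1+1 : ℕ) : ZMod n) = ((0 : ℕ) : ZMod n) := by
          push_cast; ring
        rw [e]
      rw [ht0, ht1]
      have hs3 : ∑ m ∈ Finset.Ico 2 i.val, ((D (2 - ((m+1 : ℕ) : ZMod n)) : ℤ) : ZMod 2)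
          = ∑ ℓ ∈ Finset.Icc (n + 2 - i.val) (n-1), D2 ℓ := by
        apply Finset.sum_nbij' (fun m => n + 1 - m) (fun ℓ => n + 1 - ℓ)
        · intro a ha; simp only [Finset.mem_Ico, Finset.mem_Icc] at *; omega
        · intro a ha; simp only [Finset.mem_Ico, Finset.mem_Icc] at *; omega
        · intro a ha; simp only [Finset.mem_Ico] at ha; omega
        · intro a ha; simp only [Finset.mem_Icc] at ha; omega
        · intro a ha
          simp only [Finset.mem_Ico] at ha
          have hcast : (2 : ZMod n) - ((a+1 : ℕ) : ZMod n) = ((n + 1 - a : ℕ) : ZMod n) := by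
            have h3 : a ≤ n + 1 := by omega
            rw [Nat.cast_sub h3]
            push_cast [ZMod.natCast_self]
            ring
          rw [hcast]
      rw [hs3]
      ring
    rw [hs1, hs2]
    ring
  have hD21 : ((D 1 : ℤ) : ZMod 2) = D2 1 := by
    rw [hD2]
    norm_num
  have hevF1 : ∀ i : ZMod n, i + i = 1 → Even (F' i) := by
    intro i hi
    have hvn : i.val < n := ZMod.val_lt i
    have hmod : (i.val + i.val) % n = 1 % n := by
      have hc : ((i.val + i.val : ℕ) : ZMod n) = ((1 : ℕ) : ZMod n) := by
        push_cast [cast_natCast_val]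
        rw [hi]
      exact (ZMod.natCast_eq_natCast_iff _ _ _).1 hc
    rw [Nat.mod_eq_of_lt (show 1 < n by omega)] at hmod
    have hkey : n = i.val + i.val - 1 ∧ 2 ≤ i.val := by
      rcases Nat.lt_or_ge (i.val + i.val) n with h | h
      · rw [Nat.mod_eq_of_lt h] at hmod; omega
      · rw [Nat.mod_eq_sub_mod h, Nat.mod_eq_of_lt (by omega)] at hmod
        omega
    obtain ⟨hn2, hv2⟩ := hkey
    rw [even_iff_cast2]
    show ((F i + D 1 : ℤ) : ZMod 2) = 0
    rw [Int.cast_add, hsubF i hv2, hD21]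
    rw [show n + 2 - i.val = i.val + 1 by omega]
    rw [show Finset.Icc 1 i.val = Finset.Ioc 0 i.val from Finset.Icc_add_one_left_eq_Ioc 0 i.val]
    rw [show Finset.Icc (i.val + 1) (n-1) = Finset.Ioc i.val (n-1) from Finset.Icc_add_one_left_eq_Ioc _ _]
    have hab := Finset.sum_Ioc_consecutive D2 (Nat.zero_le i.val) (show i.val ≤ n - 1 by omega)
    rw [hD2sum] at hab
    have hre : ∑ ℓ ∈ Finset.Ioc 0 i.val, D2 ℓ + D2 1 + D2 0 + ∑ ℓ ∈ Finset.Ioc i.val (n-1), D2 ℓ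
        + D2 1
        = (∑ ℓ ∈ Finset.Ioc 0 i.val, D2 ℓ + ∑ ℓ ∈ Finset.Ioc i.val (n-1), D2 ℓ) + D2 0
          + (D2 1 + D2 1) := by ring
    rw [hre, hab]
    simp [CharTwo.add_self_eq_zero]
  have hevG : ∀ i : ZMod n, i + i = 2 → Even (G i) := by
    intro i hi
    by_cases h1 : i = 1
    · have hz : G i = 0 := by
        show D i - F' i = 0
        show D i - (F i + D 1) = 0
        rw [h1, hF1]
        ring
      rw [hz]
      exact Even.zero
    · have hvn : i.val < n := ZMod.val_lt i
      have hv1 : i.val ≠ 1 := by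
        intro hfalse
        exact h1 (by rw [← cast_natCast_val i, hfalse, Nat.cast_one])
      have hmod : (i.val + i.val) % n = 2 % n := by
        have hc : ((i.val + i.val : ℕ) : ZMod n) = ((2 : ℕ) : ZMod n) := by
          push_cast [cast_natCast_val]
          rw [hi]
        exact (ZMod.natCast_eq_natCast_iff _ _ _).1 hc
      rw [Nat.mod_eq_of_lt (show 2 < n by omega)] at hmod
      have hkey : n + 2 = i.val + i.val ∧ 2 ≤ i.val := by
        rcases Nat.lt_or_ge (i.val + i.val) n with h | h
        · rw [Nat.mod_eq_of_lt h] at hmod; omega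
        · rw [Nat.mod_eq_sub_mod h, Nat.mod_eq_of_lt (by omega)] at hmod
          omega
      obtain ⟨hn2, hv2⟩ := hkey
      rw [even_iff_cast2]
      show ((D i - (F i + D 1) : ℤ) : ZMod 2) = 0
      rw [Int.cast_sub, Int.cast_add, CharTwo.sub_eq_add, hsubF i hv2, hD21]
      have hDi : ((D i : ℤ) : ZMod 2) = D2 i.val := by
        show ((D i : ℤ) : ZMod 2) = ((D ((i.val : ℕ) : ZMod n) : ℤ) : ZMod 2)
        rw [cast_natCast_val]
      rw [hDi]
      rw [show n + 2 - i.val = i.val by omega]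
      rw [show Finset.Icc 1 i.val = Finset.Ioc 0 i.val from Finset.Icc_add_one_left_eq_Ioc 0 i.val]
      have htop : ∑ ℓ ∈ Finset.Ioc 0 i.val, D2 ℓ
          = ∑ ℓ ∈ Finset.Ioc 0 (i.val - 1), D2 ℓ + D2 i.val := by
        have h5 := Finset.sum_Ioc_succ_top (show 0 ≤ i.val - 1 by omega) D2
        rw [show i.val - 1 + 1 = i.val by omega] at h5
        exact h5
      have hicc : Finset.Icc i.val (n-1) = Finset.Ioc (i.val - 1) (n-1) := by
        rw [← Finset.Icc_add_one_left_eq_Ioc, show i.val - 1 + 1 = i.val by omega]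
      rw [htop, hicc]
      have hab := Finset.sum_Ioc_consecutive D2 (Nat.zero_le (i.val - 1))
        (show i.val - 1 ≤ n - 1 by omega)
      rw [hD2sum] at hab
      have hre : D2 i.val + (∑ ℓ ∈ Finset.Ioc 0 (i.val-1), D2 ℓ + D2 i.val + D2 1 + D2 0
          + ∑ ℓ ∈ Finset.Ioc (i.val-1) (n-1), D2 ℓ + D2 1)
          = (∑ ℓ ∈ Finset.Ioc 0 (i.val-1), D2 ℓ + ∑ ℓ ∈ Finset.Ioc (i.val-1) (n-1), D2 ℓ)
            + D2 0 + (D2 1 + D2 1) + (D2 i.val + D2 i.val) := by ring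
      rw [hre, hab]
      simp [CharTwo.add_self_eq_zero]
  obtain ⟨f, hf⟩ := realize 1 F' hSym' hevF1
  obtain ⟨g, hg⟩ := realize 2 G hGsym hevG
  refine ⟨f, g, fun i => ?_⟩
  have h1 := hf i
  have h2 := hg i
  have h3 : F' i = F i + D 1 := rfl
  have h4 : G i = D i - F' i := rfl
  linarith

end ZCol

section XYCol
variable {n : ℕ} [NeZero n]

lemma xycol (X Y : ZMod n → ℤ) (h : ∑ i, X i = ∑ i, Y i) :
    ∃ a b : ZMod n → ℤ, (∀ i, a i + b i = X i) ∧ (∀ i, a (1 - i) + b (2 - i) = Y i) := by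
  set d : ZMod n → ℤ := fun k => Y (2 - k) - X k with hd
  have hd0 : ∑ k, d k = 0 := by
    rw [hd]
    rw [Finset.sum_sub_distrib, sum_shift_sub 2 Y, h, sub_self]
  obtain ⟨F, _, hFstep⟩ := tel d hd0
  refine ⟨fun k => - F k, fun i => X i + F i, fun i => by ring, fun i => ?_⟩
  have h1 := hFstep (2 - i)
  have h2 : (2 : ZMod n) - i - 1 = 1 - i := by ring
  have h3 : d (2 - i) = Y i - X (2 - i) := by
    show Y (2 - (2 - i)) - X (2 - i) = Y i - X (2 - i)
    rw [show (2 : ZMod n) - (2 - i) = i by ring]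
  rw [h2, h3] at h1
  show - F (1 - i) + (X (2 - i) + F (2 - i)) = Y i
  linarith

end XYCol



section Glue
variable (n s t : ℕ) [NeZero n]

lemma sig1_z (j : Fin s) (i : ZMod n) : sig1 n s t (zv n s t j i) = zv n s t j (1 - i) := rfl
lemma sig1_x (j : Fin t) (i : ZMod n) : sig1 n s t (xv n s t j i) = yv n s t j (1 - i) := rfl
lemma sig1_y (j : Fin t) (i : ZMod n) : sig1 n s t (yv n s t j i) = xv n s t j (1 - i) := rfl
lemma sig2_z (j : Fin s) (i : ZMod n) : sig2 n s t (zv n s t j i) = zv n s t j (2 - i) := rfl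
lemma sig2_x (j : Fin t) (i : ZMod n) : sig2 n s t (xv n s t j i) = yv n s t j (2 - i) := rfl
lemma sig2_y (j : Fin t) (i : ZMod n) : sig2 n s t (yv n s t j i) = xv n s t j (2 - i) := rfl

lemma vrt_sum_split {M : Type*} [AddCommGroup M] (φ : Vrt n s t → M) :
    ∑ v, φ v = (∑ j : Fin s, ∑ i : ZMod n, φ (zv n s t j i))
      + ((∑ j : Fin t, ∑ i : ZMod n, φ (xv n s t j i))
        + (∑ j : Fin t, ∑ i : ZMod n, φ (yv n s t j i))) := by
  rw [Fintype.sum_sum_type, Fintype.sum_sum_type, Fintype.sum_prod_type, Fintype.sum_prod_type,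
    Fintype.sum_prod_type]
  rfl

lemma weighted_column (c : ZMod n) (e : ZMod n → ℤ) :
    ∑ i : ZMod n, i * ((e (c - i) : ℤ) : ZMod n)
      = ∑ i : ZMod n, (c - i) * ((e i : ℤ) : ZMod n) := by
  apply Fintype.sum_equiv (Equiv.subLeft c)
  intro x
  simp only [Equiv.subLeft_apply, sub_sub_cancel]

/-- forward direction, generic in the reflection -/
lemma forward_cond (c : ZMod n) (σ : Vrt n s t → Vrt n s t) (hinv : ∀ v, σ (σ v) = v)
    (hσz : ∀ j i, σ (zv n s t j i) = zv n s t j (c - i))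
    (hσx : ∀ j i, σ (xv n s t j i) = yv n s t j (c - i))
    (hσy : ∀ j i, σ (yv n s t j i) = xv n s t j (c - i))
    (p : Vrt n s t → ℤ) (hp0 : ∑ v, p v = 0)
    (hp1 : ∀ v, p (σ v) = p v) (hp2 : ∀ v, σ v = v → Even (p v)) :
    ((∑ v, idx n s t v * ((p v : ℤ) : ZMod n)) = 0 ∧
     (∀ j : Fin t, ∑ i, p (xv n s t j i) = ∑ i, p (yv n s t j i)) ∧
     (∀ j : Fin s, Even (∑ i, p (zv n s t j i)))) := by
  have hidx : ∀ v, idx n s t v + idx n s t (σ v) = c := by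
    rintro (⟨j, i⟩ | ⟨j, i⟩ | ⟨j, i⟩)
    · rw [show (Sum.inl (j, i) : Vrt n s t) = zv n s t j i from rfl, hσz]
      show i + (c - i) = c
      ring
    · rw [show (Sum.inr (Sum.inl (j, i)) : Vrt n s t) = xv n s t j i from rfl, hσx]
      show i + (c - i) = c
      ring
    · rw [show (Sum.inr (Sum.inr (j, i)) : Vrt n s t) = yv n s t j i from rfl, hσy]
      show i + (c - i) = c
      ring
  refine ⟨?_, ?_, ?_⟩
  · obtain ⟨W, hW, hK⟩ := pair_sum (n := n) σ hinv p hp1 hp2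
    have hW0 : W = 0 := by rw [hp0] at hW; omega
    rw [hK (idx n s t) c hidx, hW0]
    simp
  · intro j
    have h1 : ∀ i : ZMod n, p (xv n s t j i) = p (yv n s t j (c - i)) := by
      intro i
      rw [← hp1 (xv n s t j i), hσx]
    calc ∑ i, p (xv n s t j i) = ∑ i, p (yv n s t j (c - i)) :=
          Finset.sum_congr rfl (fun i _ => h1 i)
      _ = ∑ i, p (yv n s t j i) := sum_shift_sub c (fun i => p (yv n s t j i))
  · intro j
    obtain ⟨W, hW, _⟩ := pair_sum (n := n) (fun i : ZMod n => c - i) (fun i => by ring)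
      (fun i => p (zv n s t j i))
      (fun i => by
        show p (zv n s t j (c - i)) = p (zv n s t j i)
        rw [← hp1 (zv n s t j i), hσz])
      (fun i hi => hp2 (zv n s t j i) (by
        rw [hσz, show c - i = i from hi]))
    exact ⟨W, by linarith⟩

lemma correction_sum {k : ℕ} (H : Fin k → ZMod n → ℤ) (j0 : Fin k) (M : ℤ) :
    ∑ j, ∑ i : ZMod n, (H j i - (if j = j0 then M else 0))
      = (∑ j, ∑ i : ZMod n, H j i) - n * M := by
  have e1 : ∀ j : Fin k, ∑ i : ZMod n, (H j i - (if j = j0 then M else 0))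
      = (∑ i : ZMod n, H j i) - n * (if j = j0 then M else 0) := by
    intro j
    rw [Finset.sum_sub_distrib, Finset.sum_const, Finset.card_univ, ZMod.card, nsmul_eq_mul]
  rw [Finset.sum_congr rfl (fun j _ => e1 j), Finset.sum_sub_distrib, ← Finset.mul_sum,
    Finset.sum_ite_eq' Finset.univ j0 (fun _ => M), if_pos (Finset.mem_univ j0)]

/-- assembly of the two pieces -/
lemma assemble (δ : Vrt n s t → ℤ) (A B : Fin t → ZMod n → ℤ) (F G : Fin s → ZMod n → ℤ)
    (hx : ∀ j i, A j i + B j i = δ (xv n s t j i))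
    (hy : ∀ j i, A j (1-i) + B j (2-i) = δ (yv n s t j i))
    (hz : ∀ j i, F j i + F j (1-i) + G j i + G j (2-i) = δ (zv n s t j i))
    (hA : ((∑ j, ∑ i, A j i) + (∑ j, ∑ i, F j i) : ℤ) = 0)
    (hB : ((∑ j, ∑ i, B j i) + (∑ j, ∑ i, G j i) : ℤ) = 0) :
    δ ∈ Pgp1 n s t ⊔ Pgp2 n s t := by
  set δ₁ : Vrt n s t → ℤ := fun v => match v with
    | Sum.inl (j, i) => F j i + F j (1 - i)
    | Sum.inr (Sum.inl (j, i)) => A j i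
    | Sum.inr (Sum.inr (j, i)) => A j (1 - i) with hδ₁
  set δ₂ : Vrt n s t → ℤ := fun v => match v with
    | Sum.inl (j, i) => G j i + G j (2 - i)
    | Sum.inr (Sum.inl (j, i)) => B j i
    | Sum.inr (Sum.inr (j, i)) => B j (2 - i) with hδ₂
  have hmem1 : δ₁ ∈ Pgp1 n s t := by
    refine ⟨?_, ?_, ?_⟩
    · rw [vrt_sum_split]
      have e1 : ∀ j : Fin s, ∑ i : ZMod n, δ₁ (zv n s t j i) = 2 * ∑ i, F j i := by
        intro j
        show ∑ i : ZMod n, (F j i + F j (1 - i)) = _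
        rw [Finset.sum_add_distrib, sum_shift_sub 1 (F j)]
        ring
      have e2 : ∀ j : Fin t, ∑ i : ZMod n, δ₁ (yv n s t j i) = ∑ i, A j i := by
        intro j
        show ∑ i : ZMod n, A j (1 - i) = _
        exact sum_shift_sub 1 (A j)
      rw [Finset.sum_congr rfl (fun j _ => e1 j), Finset.sum_congr rfl (fun j _ => e2 j)]
      show (∑ j : Fin s, 2 * ∑ i, F j i) + ((∑ j, ∑ i, A j i) + (∑ j, ∑ i, A j i)) = 0
      rw [← Finset.mul_sum]
      linarith
    · rintro (⟨j, i⟩ | ⟨j, i⟩ | ⟨j, i⟩)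
      · show F j (1 - i) + F j (1 - (1 - i)) = F j i + F j (1 - i)
        rw [sub_sub_cancel]
        ring
      · show A j (1 - (1 - i)) = A j i
        rw [sub_sub_cancel]
      · rfl
    · rintro (⟨j, i⟩ | ⟨j, i⟩ | ⟨j, i⟩) hfix
      · have hii : 1 - i = i := by
          simp only [sig1, Sum.inl.injEq, Prod.mk.injEq] at hfix
          exact hfix.2
        show Even (F j i + F j (1 - i))
        rw [hii]
        exact ⟨F j i, by ring⟩
      · exfalso
        simp [sig1] at hfix
      · exfalso
        simp [sig1] at hfix
  have hmem2 : δ₂ ∈ Pgp2 n s t := by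
    refine ⟨?_, ?_, ?_⟩
    · rw [vrt_sum_split]
      have e1 : ∀ j : Fin s, ∑ i : ZMod n, δ₂ (zv n s t j i) = 2 * ∑ i, G j i := by
        intro j
        show ∑ i : ZMod n, (G j i + G j (2 - i)) = _
        rw [Finset.sum_add_distrib, sum_shift_sub 2 (G j)]
        ring
      have e2 : ∀ j : Fin t, ∑ i : ZMod n, δ₂ (yv n s t j i) = ∑ i, B j i := by
        intro j
        show ∑ i : ZMod n, B j (2 - i) = _
        exact sum_shift_sub 2 (B j)
      rw [Finset.sum_congr rfl (fun j _ => e1 j), Finset.sum_congr rfl (fun j _ => e2 j)]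
      show (∑ j : Fin s, 2 * ∑ i, G j i) + ((∑ j, ∑ i, B j i) + (∑ j, ∑ i, B j i)) = 0
      rw [← Finset.mul_sum]
      linarith
    · rintro (⟨j, i⟩ | ⟨j, i⟩ | ⟨j, i⟩)
      · show G j (2 - i) + G j (2 - (2 - i)) = G j i + G j (2 - i)
        rw [sub_sub_cancel]
        ring
      · show B j (2 - (2 - i)) = B j i
        rw [sub_sub_cancel]
      · rfl
    · rintro (⟨j, i⟩ | ⟨j, i⟩ | ⟨j, i⟩) hfix
      · have hii : 2 - i = i := by
          simp only [sig2, Sum.inl.injEq, Prod.mk.injEq] at hfix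
          exact hfix.2
        show Even (G j i + G j (2 - i))
        rw [hii]
        exact ⟨G j i, by ring⟩
      · exfalso
        simp [sig2] at hfix
      · exfalso
        simp [sig2] at hfix
  have hδeq : δ = δ₁ + δ₂ := by
    funext v
    rcases v with (⟨j, i⟩ | ⟨j, i⟩ | ⟨j, i⟩)
    · show δ (zv n s t j i) = (F j i + F j (1 - i)) + (G j i + G j (2 - i))
      rw [← hz j i]
      ring
    · show δ (xv n s t j i) = A j i + B j i
      rw [← hx j i]
    · show δ (yv n s t j i) = A j (1 - i) + B j (2 - i)
      rw [← hy j i]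
  rw [hδeq]
  exact AddSubgroup.mem_sup.2 ⟨δ₁, hmem1, δ₂, hmem2, rfl⟩

end Glue

/-- **Theorem: membership in 𝒫₁ + 𝒫₂.** -/
theorem mem_P1_sup_P2_iff (n s t : ℕ) [NeZero n] (hn : 3 ≤ n)
    (δ : Vrt n s t → ℤ) (hδ : δ ∈ DivD n s t) :
    δ ∈ Pgp1 n s t ⊔ Pgp2 n s t ↔
      ((∑ v, idx n s t v * ((δ v : ℤ) : ZMod n)) = 0 ∧
       (∀ j : Fin t, ∑ i, δ (xv n s t j i) = ∑ i, δ (yv n s t j i)) ∧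
       (∀ j : Fin s, Even (∑ i, δ (zv n s t j i)))) := by
  have h0 : ∑ v, δ v = 0 := hδ
  have hs1inv : ∀ v, sig1 n s t (sig1 n s t v) = v := by
    rintro (⟨j, i⟩ | ⟨j, i⟩ | ⟨j, i⟩) <;> simp [sig1, sub_sub_cancel]
  have hs2inv : ∀ v, sig2 n s t (sig2 n s t v) = v := by
    rintro (⟨j, i⟩ | ⟨j, i⟩ | ⟨j, i⟩) <;> simp [sig2, sub_sub_cancel]
  constructor
  · intro hmem
    obtain ⟨p, hp, q, hq, hpq⟩ := AddSubgroup.mem_sup.1 hmem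
    obtain ⟨hp0, hp1, hp2⟩ := hp
    obtain ⟨hq0, hq1, hq2⟩ := hq
    obtain ⟨hc1p, hc2p, hc3p⟩ := forward_cond n s t 1 (sig1 n s t) hs1inv
      (sig1_z n s t) (sig1_x n s t) (sig1_y n s t) p hp0 hp1 hp2
    obtain ⟨hc1q, hc2q, hc3q⟩ := forward_cond n s t 2 (sig2 n s t) hs2inv
      (sig2_z n s t) (sig2_x n s t) (sig2_y n s t) q hq0 hq1 hq2
    subst hpq
    refine ⟨?_, ?_, ?_⟩
    · have e : ∀ v : Vrt n s t, idx n s t v * (((p + q) v : ℤ) : ZMod n)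
          = idx n s t v * ((p v : ℤ) : ZMod n) + idx n s t v * ((q v : ℤ) : ZMod n) := by
        intro v
        show idx n s t v * ((p v + q v : ℤ) : ZMod n) = _
        push_cast
        ring
      rw [Finset.sum_congr rfl (fun v _ => e v), Finset.sum_add_distrib, hc1p, hc1q, add_zero]
    · intro j
      show ∑ i, (p (xv n s t j i) + q (xv n s t j i)) = ∑ i, (p (yv n s t j i) + q (yv n s t j i))
      rw [Finset.sum_add_distrib, Finset.sum_add_distrib, hc2p j, hc2q j]
    · intro j
      have : ∑ i, (p + q) (zv n s t j i)
          = ∑ i, p (zv n s t j i) + ∑ i, q (zv n s t j i) := by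
        rw [← Finset.sum_add_distrib]
        rfl
      rw [this]
      exact (hc3p j).add (hc3q j)
  · rintro ⟨h1, h2, h3⟩
    choose A B hAB1 hAB2 using fun j : Fin t =>
      xycol (fun i => δ (xv n s t j i)) (fun i => δ (yv n s t j i)) (h2 j)
    choose F G hFG using fun j : Fin s =>
      zcol hn (fun i => δ (zv n s t j i)) (h3 j)
    -- total degree identity
    have hsum : ((∑ j, ∑ i, A j i) + (∑ j, ∑ i, F j i) : ℤ)
        + ((∑ j, ∑ i, B j i) + (∑ j, ∑ i, G j i)) = 0 := by
      have hh := h0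
      rw [vrt_sum_split] at hh
      have ez : ∀ j : Fin s, ∑ i : ZMod n, δ (zv n s t j i)
          = 2 * ((∑ i, F j i) + (∑ i, G j i)) := by
        intro j
        rw [← Finset.sum_congr rfl (fun i (_ : i ∈ Finset.univ) => hFG j i)]
        rw [Finset.sum_add_distrib, Finset.sum_add_distrib, Finset.sum_add_distrib,
          sum_shift_sub 1 (F j), sum_shift_sub 2 (G j)]
        ring
      have ex : ∀ j : Fin t, ∑ i : ZMod n, δ (xv n s t j i)
          = (∑ i, A j i) + (∑ i, B j i) := by
        intro j
        rw [← Finset.sum_congr rfl (fun i (_ : i ∈ Finset.univ) => hAB1 j i),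
          Finset.sum_add_distrib]
      have ey : ∀ j : Fin t, ∑ i : ZMod n, δ (yv n s t j i)
          = (∑ i, A j i) + (∑ i, B j i) := by
        intro j
        rw [← Finset.sum_congr rfl (fun i (_ : i ∈ Finset.univ) => hAB2 j i),
          Finset.sum_add_distrib, sum_shift_sub 1 (A j), sum_shift_sub 2 (B j)]
      rw [Finset.sum_congr rfl (fun j _ => ez j), Finset.sum_congr rfl (fun j _ => ex j),
        Finset.sum_congr rfl (fun j _ => ey j)] at hh
      have e4 : ∑ j : Fin s, 2 * ((∑ i, F j i) + (∑ i, G j i))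
          = 2 * ((∑ j, ∑ i, F j i) + (∑ j, ∑ i, G j i)) := by
        rw [← Finset.mul_sum, Finset.sum_add_distrib]
      have e5 : ∑ j : Fin t, ((∑ i, A j i) + (∑ i, B j i))
          = (∑ j, ∑ i, A j i) + (∑ j, ∑ i, B j i) := Finset.sum_add_distrib
      rw [e4, e5] at hh
      linarith
    -- the ZMod n invariant identity
    have hSA0 : (((∑ j, ∑ i, A j i) + (∑ j, ∑ i, F j i) : ℤ) : ZMod n) = 0 := by
      have hinv := h1
      rw [vrt_sum_split n s t (fun v => idx n s t v * ((δ v : ℤ) : ZMod n))] at hinv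
      have ez : ∀ j : Fin s, ∑ i : ZMod n,
            idx n s t (zv n s t j i) * ((δ (zv n s t j i) : ℤ) : ZMod n)
          = (((∑ i, F j i : ℤ)) : ZMod n) + 2 * (((∑ i, G j i : ℤ)) : ZMod n) := by
        intro j
        have e0 : ∀ i : ZMod n, idx n s t (zv n s t j i) * ((δ (zv n s t j i) : ℤ) : ZMod n)
            = i * ((F j i : ℤ) : ZMod n) + i * ((F j (1-i) : ℤ) : ZMod n)
              + i * ((G j i : ℤ) : ZMod n) + i * ((G j (2-i) : ℤ) : ZMod n) := by
          intro i
          rw [← hFG j i]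
          show i * ((F j i + F j (1-i) + G j i + G j (2-i) : ℤ) : ZMod n) = _
          push_cast
          ring
        rw [Finset.sum_congr rfl (fun i _ => e0 i), Finset.sum_add_distrib,
          Finset.sum_add_distrib, Finset.sum_add_distrib,
          weighted_column n 1 (F j), weighted_column n 2 (G j)]
        have ecomb : ∀ (e : ZMod n → ℤ) (c : ZMod n),
            (∑ i : ZMod n, i * ((e i : ℤ) : ZMod n))
              + ∑ i : ZMod n, (c - i) * ((e i : ℤ) : ZMod n)
            = c * (((∑ i, e i : ℤ)) : ZMod n) := by
          intro e c
          rw [← Finset.sum_add_distrib]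
          push_cast
          rw [Finset.mul_sum]
          apply Finset.sum_congr rfl
          intro i _
          ring
        have := ecomb (F j) 1
        have := ecomb (G j) 2
        rw [show ∑ i : ZMod n, i * ((F j i : ℤ) : ZMod n)
              + ∑ i : ZMod n, (1 - i) * ((F j i : ℤ) : ZMod n)
              + ∑ i : ZMod n, i * ((G j i : ℤ) : ZMod n)
              + ∑ i : ZMod n, (2 - i) * ((G j i : ℤ) : ZMod n)
            = (∑ i : ZMod n, i * ((F j i : ℤ) : ZMod n)
              + ∑ i : ZMod n, (1 - i) * ((F j i : ℤ) : ZMod n))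
              + (∑ i : ZMod n, i * ((G j i : ℤ) : ZMod n)
              + ∑ i : ZMod n, (2 - i) * ((G j i : ℤ) : ZMod n)) by ring,
          ecomb (F j) 1, ecomb (G j) 2]
        ring
      have exy : ∀ j : Fin t,
          (∑ i : ZMod n, idx n s t (xv n s t j i) * ((δ (xv n s t j i) : ℤ) : ZMod n))
          + (∑ i : ZMod n, idx n s t (yv n s t j i) * ((δ (yv n s t j i) : ℤ) : ZMod n))
          = (((∑ i, A j i : ℤ)) : ZMod n) + 2 * (((∑ i, B j i : ℤ)) : ZMod n) := by
        intro j
        have e0 : ∀ i : ZMod n, idx n s t (xv n s t j i) * ((δ (xv n s t j i) : ℤ) : ZMod n)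
            = i * ((A j i : ℤ) : ZMod n) + i * ((B j i : ℤ) : ZMod n) := by
          intro i
          rw [← hAB1 j i]
          show i * ((A j i + B j i : ℤ) : ZMod n) = _
          push_cast
          ring
        have e1 : ∀ i : ZMod n, idx n s t (yv n s t j i) * ((δ (yv n s t j i) : ℤ) : ZMod n)
            = i * ((A j (1-i) : ℤ) : ZMod n) + i * ((B j (2-i) : ℤ) : ZMod n) := by
          intro i
          rw [← hAB2 j i]
          show i * ((A j (1-i) + B j (2-i) : ℤ) : ZMod n) = _
          push_cast
          ring
        rw [Finset.sum_congr rfl (fun i _ => e0 i), Finset.sum_congr rfl (fun i _ => e1 i),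
          Finset.sum_add_distrib, Finset.sum_add_distrib,
          weighted_column n 1 (A j), weighted_column n 2 (B j)]
        have ecomb : ∀ (e : ZMod n → ℤ) (c : ZMod n),
            (∑ i : ZMod n, i * ((e i : ℤ) : ZMod n))
              + ∑ i : ZMod n, (c - i) * ((e i : ℤ) : ZMod n)
            = c * (((∑ i, e i : ℤ)) : ZMod n) := by
          intro e c
          rw [← Finset.sum_add_distrib]
          push_cast
          rw [Finset.mul_sum]
          apply Finset.sum_congr rfl
          intro i _
          ring
        rw [show (∑ i : ZMod n, i * ((A j i : ℤ) : ZMod n)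
              + ∑ i : ZMod n, i * ((B j i : ℤ) : ZMod n))
              + (∑ i : ZMod n, (1 - i) * ((A j i : ℤ) : ZMod n)
              + ∑ i : ZMod n, (2 - i) * ((B j i : ℤ) : ZMod n))
            = (∑ i : ZMod n, i * ((A j i : ℤ) : ZMod n)
              + ∑ i : ZMod n, (1 - i) * ((A j i : ℤ) : ZMod n))
              + (∑ i : ZMod n, i * ((B j i : ℤ) : ZMod n)
              + ∑ i : ZMod n, (2 - i) * ((B j i : ℤ) : ZMod n)) by ring,
          ecomb (A j) 1, ecomb (B j) 2]
        ring
      -- combine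
      have hxy : (∑ j : Fin t, ∑ i : ZMod n,
            idx n s t (xv n s t j i) * ((δ (xv n s t j i) : ℤ) : ZMod n))
          + ∑ j : Fin t, ∑ i : ZMod n,
            idx n s t (yv n s t j i) * ((δ (yv n s t j i) : ℤ) : ZMod n)
          = ∑ j : Fin t, ((((∑ i, A j i : ℤ)) : ZMod n) + 2 * (((∑ i, B j i : ℤ)) : ZMod n)) := by
        rw [← Finset.sum_add_distrib]
        exact Finset.sum_congr rfl (fun j _ => exy j)
      rw [Finset.sum_congr rfl (fun j _ => ez j), hxy] at hinv
      rw [Finset.sum_add_distrib, Finset.sum_add_distrib] at hinv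
      have hc : ∀ (H : Fin s → ZMod n → ℤ),
          ∑ j : Fin s, (((∑ i, H j i : ℤ)) : ZMod n) = (((∑ j, ∑ i, H j i : ℤ)) : ZMod n) := by
        intro H
        push_cast
        rfl
      have hc' : ∀ (H : Fin t → ZMod n → ℤ),
          ∑ j : Fin t, (((∑ i, H j i : ℤ)) : ZMod n) = (((∑ j, ∑ i, H j i : ℤ)) : ZMod n) := by
        intro H
        push_cast
        rfl
      have hc2 : ∀ (H : Fin s → ZMod n → ℤ),
          ∑ j : Fin s, 2 * (((∑ i, H j i : ℤ)) : ZMod n)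
            = 2 * (((∑ j, ∑ i, H j i : ℤ)) : ZMod n) := by
        intro H
        rw [← Finset.mul_sum, hc]
      have hc2' : ∀ (H : Fin t → ZMod n → ℤ),
          ∑ j : Fin t, 2 * (((∑ i, H j i : ℤ)) : ZMod n)
            = 2 * (((∑ j, ∑ i, H j i : ℤ)) : ZMod n) := by
        intro H
        rw [← Finset.mul_sum, hc']
      rw [hc F, hc2 G, hc' A, hc2' B] at hinv
      -- hinv : cast ΣΣF + 2 cast ΣΣG + (cast ΣΣA + 2 cast ΣΣB) = 0
      have hBG : ((∑ j, ∑ i, B j i) + (∑ j, ∑ i, G j i) : ℤ)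
          = -(((∑ j, ∑ i, A j i) + (∑ j, ∑ i, F j i) : ℤ)) := by linarith
      push_cast
      push_cast at hinv
      have hBG' : ((∑ j, ∑ i, (B j i : ℤ)) : ZMod n) + ((∑ j, ∑ i, (G j i : ℤ)) : ZMod n)
          = -(((∑ j, ∑ i, (A j i : ℤ)) : ZMod n) + ((∑ j, ∑ i, (F j i : ℤ)) : ZMod n)) := by
        have := congrArg (fun x : ℤ => ((x : ZMod n))) hBG
        push_cast at this
        linear_combination this
      linear_combination -hinv + 2 * hBG'
    obtain ⟨MM, hMM⟩ := (ZMod.intCast_zmod_eq_zero_iff_dvd _ n).1 hSA0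
    -- corrections
    rcases Nat.eq_zero_or_pos t with ht0 | ht
    · rcases Nat.eq_zero_or_pos s with hs0 | hs
      · subst ht0
        subst hs0
        refine assemble n 0 0 δ A B F G hAB1 hAB2 hFG ?_ ?_ <;> simp
      · set j0 : Fin s := ⟨0, hs⟩
        refine assemble n s t δ A B
          (fun j i => F j i - (if j = j0 then MM else 0))
          (fun j i => G j i - (if j = j0 then -MM else 0))
          hAB1 hAB2 ?_ ?_ ?_
        · intro j i
          have hz0 : (if j = j0 then MM else 0) + (if j = j0 then (-MM) else 0) = 0 := by
            by_cases h : j = j0 <;> simp [h]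
          rw [← hFG j i]
          linarith [hz0]
        · rw [correction_sum n F j0 MM]
          linarith [hMM]
        · rw [correction_sum n G j0 (-MM)]
          linarith [hMM, hsum]
    · set j0 : Fin t := ⟨0, ht⟩
      refine assemble n s t δ
        (fun j i => A j i - (if j = j0 then MM else 0))
        (fun j i => B j i - (if j = j0 then -MM else 0))
        F G ?_ ?_ hFG ?_ ?_
      · intro j i
        have hz0 : (if j = j0 then MM else 0) + (if j = j0 then (-MM) else 0) = 0 := by
          by_cases h : j = j0 <;> simp [h]
        rw [← hAB1 j i]
        linarith [hz0]
      · intro j i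
        have hz0 : (if j = j0 then MM else 0) + (if j = j0 then (-MM) else 0) = 0 := by
          by_cases h : j = j0 <;> simp [h]
        rw [← hAB2 j i]
        linarith [hz0]
      · rw [correction_sum n A j0 MM]
        linarith [hMM]
      · rw [correction_sum n B j0 (-MM)]
        linarith [hMM, hsum]
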